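/- Let I ⊆ ℂ with I ∩ ℝ_{≥0} nonempty, and let g, f : I → ℂ. Suppose that for every n ≥ 1 and every n×n positive semidefinite matrix A with entries in I, the matrix (g,f)_*[A] (with g applied to diagonal entries and f to off-diagonal entries) is positive semidefinite. Then for every n and every positive semidefinite A with entries in I, the matrix f[A] (f applied to all entries) is positive semidefinite, and g(x) ≥ f(x) for all x ∈ I ∩ ℝ_{≥0}. -/

import Mathlib

open scoped ComplexOrder
open Complex Matrix Finset

private lemma sum_snd_aux' {m n : ℕ} (φ : Fin n → ℂ) :
    ∑ p : Fin (m * n), φ (finProdFinEquiv.symm p).2 = (m : ℂ) * ∑ i, φ i := by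
  rw [← Equiv.sum_comp (finProdFinEquiv : Fin m × Fin n ≃ Fin (m * n))
      (fun p => φ (finProdFinEquiv.symm p).2)]
  simp [Fintype.sum_prod_type, Finset.sum_const, Finset.card_univ, nsmul_eq_mul]

private lemma key_ineq' (I : Set ℂ) (g f : ℂ → ℂ)
    (h : ∀ n : ℕ, ∀ A : Matrix (Fin n) (Fin n) ℂ, A.PosSemidef →
      (∀ i j, A i j ∈ I) →
      (Matrix.of fun i j => if i = j then g (A i j) else f (A i j)).PosSemidef)
    {n : ℕ} {A : Matrix (Fin n) (Fin n) ℂ} (hA : A.PosSemidef)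
    (hAI : ∀ i j, A i j ∈ I) (v : Fin n → ℂ) (m : ℕ) :
    0 ≤ (m : ℂ) ^ 2 * (star v ⬝ᵥ (A.map f) *ᵥ v) +
      (m : ℂ) * (∑ i, star (v i) * ((g (A i i) - f (A i i)) * v i)) := by
  set t : Fin (m * n) → Fin n := fun p => (finProdFinEquiv.symm p).2 with ht
  set B : Matrix (Fin (m * n)) (Fin (m * n)) ℂ := A.submatrix t t with hB
  have hBpsd : B.PosSemidef := hA.submatrix t
  have hM := h (m * n) B hBpsd (fun p q => hAI _ _)
  set x : Fin (m * n) → ℂ := fun p => v (t p) with hx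
  have key := hM.dotProduct_mulVec_nonneg x
  have hdecomp : (Matrix.of fun p q => if p = q then g (B p q) else f (B p q)) =
      B.map f + Matrix.diagonal (fun p => g (B p p) - f (B p p)) := by
    ext p q
    by_cases hpq : p = q <;> simp [hpq, Matrix.diagonal, Matrix.map_apply] <;> ring
  rw [hdecomp, Matrix.add_mulVec, dotProduct_add] at key
  have h1 : star x ⬝ᵥ (B.map f) *ᵥ x
      = (m : ℂ) ^ 2 * (star v ⬝ᵥ (A.map f) *ᵥ v) := by
    have inner : ∀ p, ((B.map f) *ᵥ x) p = (m : ℂ) * (((A.map f) *ᵥ v) (t p)) := by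
      intro p
      simpa [Matrix.mulVec, dotProduct, hB, hx, ht, Matrix.map_apply] using
        sum_snd_aux' (m := m) (n := n) (fun j => f (A (t p) j) * v j)
    calc star x ⬝ᵥ (B.map f) *ᵥ x
        = ∑ p : Fin (m * n), star (v (t p)) * ((m : ℂ) * (((A.map f) *ᵥ v) (t p))) := by
          simp only [dotProduct, inner]; simp [hx]
      _ = (m : ℂ) * ∑ i, star (v i) * ((m : ℂ) * (((A.map f) *ᵥ v) i)) :=
          sum_snd_aux' (fun i => star (v i) * ((m : ℂ) * (((A.map f) *ᵥ v) i)))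
      _ = (m : ℂ) ^ 2 * (star v ⬝ᵥ (A.map f) *ᵥ v) := by
          simp [dotProduct, Finset.mul_sum]; ring_nf
  have h2 : star x ⬝ᵥ (Matrix.diagonal (fun p => g (B p p) - f (B p p))) *ᵥ x
      = (m : ℂ) * (∑ i, star (v i) * ((g (A i i) - f (A i i)) * v i)) := by
    calc star x ⬝ᵥ (Matrix.diagonal (fun p => g (B p p) - f (B p p))) *ᵥ x
        = ∑ p : Fin (m * n), star (v (t p)) * ((g (A (t p) (t p)) - f (A (t p) (t p))) * v (t p)) := by
          simp [dotProduct, Matrix.mulVec_diagonal, hx, hB, Matrix.submatrix_apply]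
      _ = (m : ℂ) * _ := sum_snd_aux' (fun i => star (v i) * ((g (A i i) - f (A i i)) * v i))
  rw [h1, h2] at key
  exact key

private lemma herm_aux' (I : Set ℂ) (g f : ℂ → ℂ)
    (h : ∀ n : ℕ, ∀ A : Matrix (Fin n) (Fin n) ℂ, A.PosSemidef →
      (∀ i j, A i j ∈ I) →
      (Matrix.of fun i j => if i = j then g (A i j) else f (A i j)).PosSemidef)
    {n : ℕ} {A : Matrix (Fin n) (Fin n) ℂ} (hA : A.PosSemidef)
    (hAI : ∀ i j, A i j ∈ I) : (A.map f).IsHermitian := by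
  set t : Fin (2 * n) → Fin n := fun p => (finProdFinEquiv.symm p).2 with ht
  set B : Matrix (Fin (2 * n)) (Fin (2 * n)) ℂ := A.submatrix t t with hB
  have hM := h (2 * n) B (hA.submatrix t) (fun p q => hAI _ _)
  have hMH := hM.1
  ext i j
  have hp : t (finProdFinEquiv ((0 : Fin 2), i)) = i := by
    simp only [ht, Equiv.symm_apply_apply]
  have hq : t (finProdFinEquiv ((1 : Fin 2), j)) = j := by
    simp only [ht, Equiv.symm_apply_apply]
  have hne : finProdFinEquiv ((0 : Fin 2), i) ≠ finProdFinEquiv ((1 : Fin 2), j) := by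
    simp [finProdFinEquiv.injective.ne_iff, Prod.ext_iff]
  have := congrFun (congrFun hMH (finProdFinEquiv ((0 : Fin 2), i)))
    (finProdFinEquiv ((1 : Fin 2), j))
  simp only [Matrix.conjTranspose_apply, Matrix.of_apply, hne, hne.symm, if_neg] at this
  simpa [Matrix.conjTranspose_apply, Matrix.map_apply, hB, Matrix.submatrix_apply, hp, hq]
    using this

theorem gf_star_preserver_implies (I : Set ℂ) (g f : ℂ → ℂ)
    (hI : ∃ x : ℝ, 0 ≤ x ∧ (x : ℂ) ∈ I)
    (h : ∀ n : ℕ, ∀ A : Matrix (Fin n) (Fin n) ℂ, A.PosSemidef →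
      (∀ i j, A i j ∈ I) →
      (Matrix.of fun i j => if i = j then g (A i j) else f (A i j)).PosSemidef) :
    (∀ n : ℕ, ∀ A : Matrix (Fin n) (Fin n) ℂ, A.PosSemidef →
      (∀ i j, A i j ∈ I) → (A.map f).PosSemidef) ∧
    (∀ x : ℝ, 0 ≤ x → (x : ℂ) ∈ I →
      (g x - f x).im = 0 ∧ 0 ≤ (g x - f x).re) := by
  constructor
  · intro n A hA hAI
    refine Matrix.PosSemidef.of_dotProduct_mulVec_nonneg (herm_aux' I g f h hA hAI) ?_
    intro v
    set Q := star v ⬝ᵥ (A.map f) *ᵥ v with hQ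
    set c := ∑ i, star (v i) * ((g (A i i) - f (A i i)) * v i) with hc
    have key : ∀ m : ℕ, 0 ≤ (m : ℝ) ^ 2 * Q.re + (m : ℝ) * c.re ∧
        0 = (m : ℝ) ^ 2 * Q.im + (m : ℝ) * c.im := by
      intro m
      have k := key_ineq' I g f h hA hAI v m
      rw [show ((m : ℂ)) ^ 2 = (((m ^ 2 : ℕ)) : ℂ) by push_cast; ring] at k
      rw [Complex.le_def] at k
      rw [← hQ, ← hc] at k
      simp only [Complex.add_re, Complex.add_im, Complex.mul_re, Complex.mul_im,
        Complex.zero_re, Complex.zero_im, Complex.natCast_re, Complex.natCast_im] at k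
      push_cast at k
      constructor <;> linarith [k.1, k.2]
    have him : Q.im = 0 := by
      have k1 := (key 1).2
      have k2 := (key 2).2
      push_cast at k1 k2
      nlinarith [k1, k2]
    have hre : 0 ≤ Q.re := by
      by_contra hneg
      push_neg at hneg
      obtain ⟨m, hm⟩ := exists_nat_gt (c.re / (-Q.re))
      have hm' : c.re < (m : ℝ) * (-Q.re) := (div_lt_iff₀ (by linarith)).1 hm
      have k1 := (key (m + 1)).1
      push_cast at k1
      have hmm : ((m : ℝ) + 1) * (c.re + (m : ℝ) * Q.re) < 0 :=
        mul_neg_of_pos_of_neg (by positivity) (by linarith)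
      have hq2 : ((m : ℝ) + 1) * Q.re < 0 :=
        mul_neg_of_pos_of_neg (by positivity) hneg
      nlinarith [k1, hmm, hq2]
    rw [Complex.le_def]
    simp [him, hre]
  · intro x hx hxI
    set A : Matrix (Fin 2) (Fin 2) ℂ := Matrix.of fun _ _ => (x : ℂ) with hA
    have hApsd : A.PosSemidef := by
      refine Matrix.PosSemidef.of_dotProduct_mulVec_nonneg ?_ ?_
      · ext i j; simp [hA, Matrix.conjTranspose_apply, Complex.conj_ofReal]
      · intro v
        have h1 : star v ⬝ᵥ A *ᵥ v
            = (x : ℂ) * ((starRingEnd ℂ) (v 0 + v 1) * (v 0 + v 1)) := by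
          simp [dotProduct, Matrix.mulVec, hA, Fin.sum_univ_two]
          ring
        have h2 : (x : ℂ) * ((starRingEnd ℂ) (v 0 + v 1) * (v 0 + v 1))
            = ((x * Complex.normSq (v 0 + v 1) : ℝ) : ℂ) := by
          rw [mul_comm ((starRingEnd ℂ) _), Complex.mul_conj]
          push_cast
          ring
        rw [h1, h2]
        exact Complex.zero_le_real.2 (mul_nonneg hx (Complex.normSq_nonneg _))
    have hM := h 2 A hApsd (fun i j => hxI)
    have key := hM.dotProduct_mulVec_nonneg ![1, -1]
    have hform : star ![(1:ℂ), -1] ⬝ᵥ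
        (Matrix.of fun i j => if i = j then g (A i j) else f (A i j)) *ᵥ ![1, -1]
        = 2 * (g x - f x) := by
      simp [dotProduct, Matrix.mulVec, Fin.sum_univ_two, hA]
      ring
    rw [hform, Complex.le_def] at key
    simp only [Complex.mul_im, Complex.mul_re, Complex.zero_re, Complex.zero_im,
      Complex.re_ofNat, Complex.im_ofNat] at key
    constructor <;> nlinarith [key.1, key.2]
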